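/- arXiv:0802.4086 — 5 statements merged into one kernel-verified Lean document; each statement's English description precedes it below -/
import Mathlib

section
/- Let Γ be a cyclic group of order d with generator γ, q ≥ 2 an integer, and M a Z[Γ]-module that is free as a Z-module. Then the image of δ_q = qγ - 1 on M equals {m ∈ M : Tr_q(m) ∈ (q^d - 1)M}, where Tr_q = Σ_{i=0}^{d-1} q^i γ^i. -/
/-- With `Γ = ⟨γ⟩` cyclic of order `d`, `q ≥ 2`, and `M` a `ℤ[Γ]`-module
(action of `γ` encoded by `G`, `G ^ d = 1`) that is free of finite rank over `ℤ`,
the image of `δ_q = qγ - 1` equals `{m ∈ M : Tr_q m ∈ (q^d - 1)M}`. -/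
theorem stmt3 {M : Type*} [AddCommGroup M] [Module ℤ M]
    [Module.Free ℤ M] [Module.Finite ℤ M] (d q : ℕ) (hd : 0 < d) (hq : 2 ≤ q)
    (G : Module.End ℤ M) (hG : G ^ d = 1) :
    Set.range ⇑((q : ℤ) • G - 1)
      = {m : M | ∃ m' : M,
          (∑ i ∈ Finset.range d, ((q : ℤ) ^ i) • G ^ i) m = ((q : ℤ) ^ d - 1) • m'} := by
  set x : Module.End ℤ M := (q : ℤ) • G with hxdef
  have hx : ∀ i : ℕ, x ^ i = ((q : ℤ) ^ i) • G ^ i := fun i => smul_pow _ _ _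
  have hT : (∑ i ∈ Finset.range d, ((q : ℤ) ^ i) • G ^ i) = ∑ i ∈ Finset.range d, x ^ i := by
    simp [hx]
  have hxd : x ^ d - 1 = ((q : ℤ) ^ d - 1) • (1 : Module.End ℤ M) := by
    rw [hx, hG, sub_smul, one_smul]
  have key1 : (∑ i ∈ Finset.range d, x ^ i) * (x - 1)
      = ((q : ℤ) ^ d - 1) • (1 : Module.End ℤ M) := by
    rw [geom_sum_mul, hxd]
  have key2 : (x - 1) * (∑ i ∈ Finset.range d, x ^ i)
      = ((q : ℤ) ^ d - 1) • (1 : Module.End ℤ M) := by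
    rw [mul_geom_sum, hxd]
  have hne : ((q : ℤ) ^ d - 1) ≠ 0 := by
    have h1 : (1 : ℤ) < (q : ℤ) ^ d := by
      apply one_lt_pow₀ (by exact_mod_cast lt_of_lt_of_le one_lt_two hq) hd.ne'
    exact sub_ne_zero.mpr (ne_of_gt h1)
  ext m
  constructor
  · rintro ⟨n, rfl⟩
    refine ⟨n, ?_⟩
    have h := congrArg (fun f : Module.End ℤ M => f n) key1
    simp only [Module.End.mul_apply, LinearMap.smul_apply, Module.End.one_apply] at h
    rw [hT]
    exact h
  · rintro ⟨m', hm'⟩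
    refine ⟨m', ?_⟩
    have h1 : (x - 1) ((∑ i ∈ Finset.range d, x ^ i) m) = ((q : ℤ) ^ d - 1) • m := by
      have h := congrArg (fun f : Module.End ℤ M => f m) key2
      simp only [Module.End.mul_apply, LinearMap.smul_apply, Module.End.one_apply] at h
      exact h
    rw [hT] at hm'
    rw [hm'] at h1
    simp only [← Int.cast_smul_eq_zsmul ℤ, Int.cast_id] at h1
    rw [LinearMap.map_smul] at h1
    exact smul_right_injective M hne h1
end

section
/- Let Γ be cyclic of order d generated by γ, acting on a finitely generated free Z-module Y preserving a symmetric bilinear form B : Y × Y → Z. Let q, n be positive integers with n | q - 1. Then Tr_q(Y^{Γ#}) ⊆ Y^#, i.e. for every w ∈ Y with B(w, y') ∈ nZ for all y' ∈ Y^Γ, and every y' ∈ Y, one has B(Σ_{i=0}^{d-1} q^i γ^i w, y') ∈ nZ. -/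
/-- With `Γ = ⟨γ⟩` cyclic of order `d` (γ encoded by `G`, `G ^ d = 1`) acting
on the finitely generated free `ℤ`-module `Y` preserving `B`, and `n ∣ q - 1`:
`Tr_q(Y^{Γ#}) ⊆ Y^#`, i.e. if `B(w, y') ∈ nℤ` for all `Γ`-fixed `y'`, then
`B(Tr_q w, y') ∈ nℤ` for every `y' ∈ Y`. -/
theorem stmt6 {Y : Type*} [AddCommGroup Y] [Module ℤ Y]
    [Module.Free ℤ Y] [Module.Finite ℤ Y] (d q n : ℕ) (hq : 0 < q) (hn : n ∣ q - 1)
    (G : Module.End ℤ Y) (hG : G ^ d = 1)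
    (B : Y →ₗ[ℤ] Y →ₗ[ℤ] ℤ)
    (hsymm : ∀ x y : Y, B x y = B y x)
    (hinv : ∀ x y : Y, B (G x) (G y) = B x y) :
    ∀ w : Y, (∀ y' : Y, G y' = y' → (n : ℤ) ∣ B w y') →
      ∀ y' : Y, (n : ℤ) ∣ B ((∑ i ∈ Finset.range d, ((q : ℤ) ^ i) • G ^ i) w) y' := by
  intro w hw y'
  -- invariance for powers of G
  have hpow : ∀ (i : ℕ) (x y : Y), B ((G ^ i) x) ((G ^ i) y) = B x y := by
    intro i
    induction i with
    | zero => intro x y; simp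
    | succ k ih =>
      intro x y
      rw [pow_succ, Module.End.mul_apply, Module.End.mul_apply, ih, hinv]
  -- the trace element
  set s : Y := ∑ i ∈ Finset.range d, (G ^ i) y' with hs
  have hGs : G s = s := by
    rw [hs, map_sum]
    have h1 : ∀ i ∈ Finset.range d, G ((G ^ i) y') = (G ^ (i + 1)) y' := by
      intro i _
      rw [pow_succ', Module.End.mul_apply]
    rw [Finset.sum_congr rfl h1]
    have h2 := Finset.sum_range_succ (fun i => (G ^ i) y') d
    have h3 := Finset.sum_range_succ' (fun i => (G ^ i) y') d
    simp only [hG] at h2 h3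
    exact add_right_cancel (h3.symm.trans h2)
  -- divisibility of the plain trace pairing
  have hdiv : (n : ℤ) ∣ B w s := hw s hGs
  -- n divides q^i - 1
  have hq1 : (n : ℤ) ∣ (q : ℤ) - 1 := by
    have : ((q - 1 : ℕ) : ℤ) = (q : ℤ) - 1 := by
      omega
    exact this ▸ Int.natCast_dvd_natCast.mpr hn
  have hqi : ∀ i : ℕ, (n : ℤ) ∣ (q : ℤ) ^ i - 1 := fun i =>
    hq1.trans (by simpa using sub_dvd_pow_sub_pow (q : ℤ) 1 i)
  -- rewrite the main pairing as a sum
  have key : B ((∑ i ∈ Finset.range d, ((q : ℤ) ^ i) • G ^ i) w) y'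
      = ∑ i ∈ Finset.range d, (q : ℤ) ^ i * B ((G ^ i) w) y' := by
    rw [LinearMap.sum_apply, map_sum, LinearMap.sum_apply]
    apply Finset.sum_congr rfl
    intro i _
    have h1 : (((q : ℤ) ^ i) • G ^ i) w = ((q : ℤ) ^ i) • (G ^ i) w := rfl
    rw [h1, map_zsmul, LinearMap.smul_apply, smul_eq_mul]
  -- the plain-trace sum equals B w s
  have hsum : ∑ i ∈ Finset.range d, B ((G ^ i) w) y' = B w s := by
    have h1 : ∀ i ∈ Finset.range d, B ((G ^ i) w) y' = B w ((G ^ (d - i)) y') := by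
      intro i hi
      rw [Finset.mem_range] at hi
      have : (G ^ i) ((G ^ (d - i)) y') = y' := by
        rw [← Module.End.mul_apply, ← pow_add, Nat.add_sub_cancel' hi.le, hG]
        rfl
      conv_lhs => rw [← this]
      exact hpow i w _
    rw [Finset.sum_congr rfl h1]
    have h2 : ∑ i ∈ Finset.range d, B w ((G ^ (d - i)) y')
        = ∑ i ∈ Finset.range d, B w ((G ^ (i + 1)) y') := by
      rw [← Finset.sum_range_reflect]
      apply Finset.sum_congr rfl
      intro i hi
      rw [Finset.mem_range] at hi
      have hd : d - (d - 1 - i) = i + 1 := by omega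
      rw [hd]
    rw [h2, ← map_sum, hs]
    congr 1
    have : (∑ i ∈ Finset.range d, (G ^ (i + 1)) y') = G s := by
      rw [hs, map_sum]
      apply Finset.sum_congr rfl
      intro i _
      rw [pow_succ', Module.End.mul_apply]
    rw [this, hGs, hs]
  -- put everything together
  rw [key]
  have : ∑ i ∈ Finset.range d, (q : ℤ) ^ i * B ((G ^ i) w) y'
      = (∑ i ∈ Finset.range d, ((q : ℤ) ^ i - 1) * B ((G ^ i) w) y') + B w s := by
    rw [← hsum, ← Finset.sum_add_distrib]
    apply Finset.sum_congr rfl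
    intro i _
    ring
  rw [this]
  exact dvd_add (Finset.dvd_sum fun i _ => (hqi i).mul_right _) hdiv
end

section
/- Let B be a locally compact Hausdorff abelian topological group and A ⊆ B an open subgroup. Then every continuous character A → ℂ^× extends to a continuous character of B; i.e., the restriction map X(B) → X(A) is surjective. -/
noncomputable instance : RootableBy ℂˣ ℕ where
  root a n :=
    if h : n = 0 then 1
    else
      Units.mk0 (IsAlgClosed.exists_pow_nat_eq (a : ℂ) (Nat.pos_of_ne_zero h)).choose
        (by
          intro hz
          have hs := (IsAlgClosed.exists_pow_nat_eq (a : ℂ) (Nat.pos_of_ne_zero h)).choose_spec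
          rw [hz, zero_pow h] at hs
          exact a.ne_zero hs.symm)
  root_zero a := dif_pos rfl
  root_cancel {n} a hn := by
    simp only [dif_neg hn]
    ext
    push_cast
    exact (IsAlgClosed.exists_pow_nat_eq (a : ℂ) (Nat.pos_of_ne_zero hn)).choose_spec

noncomputable instance : RootableBy ℂˣ ℤ := Group.rootableByIntOfRootableByNat ℂˣ

noncomputable instance : DivisibleBy (Additive ℂˣ) ℤ where
  div a n := Additive.ofMul (RootableBy.root (Additive.toMul a) n)
  div_zero a := congrArg Additive.ofMul (RootableBy.root_zero (Additive.toMul a))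
  div_cancel {n} a hn := congrArg Additive.ofMul (RootableBy.root_cancel (Additive.toMul a) hn)

open CategoryTheory in
/-- If `A` is an open subgroup of a locally compact Hausdorff abelian
topological group `B`, then every continuous character `A → ℂˣ` extends to a continuous
character of `B`; i.e. the restriction map `X(B) → X(A)` is surjective. -/
theorem stmt10 {B : Type*} [CommGroup B] [TopologicalSpace B] [IsTopologicalGroup B]
    [LocallyCompactSpace B] [T2Space B]
    (A : Subgroup B) (hA : IsOpen (A : Set B))
    (χ : ContinuousMonoidHom A ℂˣ) :
    ∃ χ' : ContinuousMonoidHom B ℂˣ, ∀ a : A, χ' (a : B) = χ a := by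
  classical
  let i : AddCommGrpCat.of (Additive A) ⟶ AddCommGrpCat.of (Additive B) :=
    AddCommGrpCat.ofHom (MonoidHom.toAdditive A.subtype)
  haveI : CategoryTheory.Mono i := by
    rw [AddCommGrpCat.mono_iff_injective]
    intro x y h
    exact Subtype.ext h
  let f : AddCommGrpCat.of (Additive A) ⟶ AddCommGrpCat.of (ULift (Additive ℂˣ)) :=
    AddCommGrpCat.ofHom (AddEquiv.ulift.symm.toAddMonoidHom.comp (MonoidHom.toAdditive χ.toMonoidHom))
  haveI : CategoryTheory.Injective (AddCommGrpCat.of (ULift (Additive ℂˣ))) :=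
    AddCommGrpCat.injective_of_divisible _
  let φ : AddCommGrpCat.of (Additive B) ⟶ AddCommGrpCat.of (ULift (Additive ℂˣ)) :=
    CategoryTheory.Injective.factorThru f i
  have hφ : i ≫ φ = f := CategoryTheory.Injective.comp_factorThru f i
  let ψ : B →* ℂˣ := MonoidHom.toAdditive.symm (AddEquiv.ulift.toAddMonoidHom.comp (φ.hom : Additive B →+ ULift (Additive ℂˣ)))
  have hψ : ∀ a : A, ψ (a : B) = χ a := fun a => by
    have := CategoryTheory.ConcreteCategory.congr_hom hφ (Additive.ofMul a)
    exact congrArg (fun z => Additive.toMul (AddEquiv.ulift z)) this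
  have hon : ContinuousOn ψ (A : Set B) := by
    rw [continuousOn_iff_continuous_restrict]
    have : (A : Set B).domRestrict ψ = fun x => χ ⟨x.1, x.2⟩ := by
      funext x
      exact hψ ⟨x.1, x.2⟩
    rw [this]
    exact χ.continuous.comp (Continuous.subtype_mk continuous_subtype_val _)
  have hcont : Continuous ψ :=
    continuous_of_continuousAt_one ψ (hon.continuousAt (hA.mem_nhds A.one_mem))
  exact ⟨⟨ψ, hcont⟩, hψ⟩
end

section
/- Let q ≥ 2, Γ = ⟨γ⟩ cyclic of order d acting on a finitely generated free Z-module Y, and write Ȳ = Y/(q^d - 1)Y, δ_q = qγ - 1, Tr_q = Σ_{i=0}^{d-1} q^i γ^i. Let W ⊆ Y be a Γ-stable submodule. Then for ȳ ∈ Ȳ, the following are equivalent: (a) there exists a representative y ∈ W of ȳ with δ_q y ∈ (q^d - 1)W; (b) ȳ lies in the image of Tr_q(W̄) → Ȳ, where W̄ = W/(q^d - 1)W. -/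
/-- `Γ = ⟨γ⟩` cyclic of order `d` (γ acting by `G`, `G ^ d = 1`) acts on the
finitely generated free `ℤ`-module `Y`; `q ≥ 2`; `W ⊆ Y` a `Γ`-stable submodule. For
`ȳ ∈ Ȳ = Y/(q^d - 1)Y` (represented by `y : Y`), the following are equivalent:
(a) some representative `w ∈ W` of `ȳ` satisfies `δ_q w ∈ (q^d - 1)W`;
(b) `ȳ` lies in the image of `Tr_q(W̄) → Ȳ`. -/
theorem stmt15 {Y : Type*} [AddCommGroup Y] [Module ℤ Y]
    [Module.Free ℤ Y] [Module.Finite ℤ Y] (d q : ℕ) (hd : 0 < d) (hq : 2 ≤ q)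
    (G : Module.End ℤ Y) (hG : G ^ d = 1)
    (W : Submodule ℤ Y) (hW : ∀ w ∈ W, G w ∈ W) :
    ∀ y : Y,
      (∃ w ∈ W, (∃ z : Y, y - w = ((q : ℤ) ^ d - 1) • z) ∧
        (∃ u ∈ W, (q : ℤ) • G w - w = ((q : ℤ) ^ d - 1) • u)) ↔
      (∃ w ∈ W, ∃ z : Y,
        y - (∑ i ∈ Finset.range d, ((q : ℤ) ^ i) • G ^ i) w = ((q : ℤ) ^ d - 1) • z) := by
  set T : Module.End ℤ Y := ∑ i ∈ Finset.range d, ((q : ℤ) ^ i) • G ^ i with hT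
  set δ : Module.End ℤ Y := (q : ℤ) • G - 1 with hδ
  -- applying a `ℤ`-scalar multiple of an endomorphism
  have apply_z : ∀ (n : ℤ) (f : Module.End ℤ Y) (v : Y), (n • f) v = n • (f v) := by
    intro n f v
    rw [zsmul_eq_mul, Module.End.mul_apply, Module.End.intCast_apply]
  -- injectivity of nonzero integer scaling (Y is free, hence torsion-free)
  have inj : ∀ n : ℤ, n ≠ 0 → ∀ a b : Y, n • a = n • b → a = b := by
    intro n hn a b h
    rw [← Int.cast_smul_eq_zsmul ℤ n a, ← Int.cast_smul_eq_zsmul ℤ n b] at h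
    exact smul_right_injective Y (by exact_mod_cast hn) h
  have step1 : ∀ i : ℕ, (((q : ℤ) ^ i) • G ^ i) * δ
      = ((q : ℤ) ^ (i + 1)) • G ^ (i + 1) - ((q : ℤ) ^ i) • G ^ i := by
    intro i
    rw [hδ]
    simp only [zsmul_eq_mul]
    rw [mul_sub, mul_one]
    congr 1
    rw [pow_succ (q : ℤ), pow_succ G, Int.cast_mul, mul_assoc, ← mul_assoc (G ^ i),
      ← (Int.cast_commute (q : ℤ) (G ^ i)).eq, mul_assoc ((q : ℤ) : Module.End ℤ Y),
      ← mul_assoc]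
  have step2 : ∀ i : ℕ, δ * (((q : ℤ) ^ i) • G ^ i)
      = ((q : ℤ) ^ (i + 1)) • G ^ (i + 1) - ((q : ℤ) ^ i) • G ^ i := by
    intro i
    rw [hδ]
    simp only [zsmul_eq_mul]
    rw [sub_mul, one_mul]
    congr 1
    rw [pow_succ (q : ℤ), pow_succ' G, Int.cast_mul, mul_assoc, ← mul_assoc G,
      ← (Int.cast_commute ((q : ℤ) ^ i) G).eq, mul_assoc (((q : ℤ) ^ i : ℤ) : Module.End ℤ Y),
      ← mul_assoc, ← (Int.cast_commute ((q : ℤ) ^ i) ((q : ℤ) : Module.End ℤ Y)).eq,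
      ← Int.cast_mul, mul_comm ((q : ℤ) ^ i) (q : ℤ), ← pow_succ']
  have endsum : ((q : ℤ) ^ d) • G ^ d - ((q : ℤ) ^ 0) • G ^ 0
      = ((q : ℤ) ^ d - 1) • (1 : Module.End ℤ Y) := by
    rw [hG, pow_zero, pow_zero, sub_zsmul, one_zsmul]; abel
  have hTδ : T * δ = ((q : ℤ) ^ d - 1) • (1 : Module.End ℤ Y) := by
    rw [hT, Finset.sum_mul]
    simp only [step1]
    rw [Finset.sum_range_sub (fun i => ((q : ℤ) ^ i) • G ^ i)]
    exact endsum
  have hδT : δ * T = ((q : ℤ) ^ d - 1) • (1 : Module.End ℤ Y) := by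
    rw [hT, Finset.mul_sum]
    simp only [step2]
    rw [Finset.sum_range_sub (fun i => ((q : ℤ) ^ i) • G ^ i)]
    exact endsum
  have hq1 : ((q : ℤ) ^ d - 1) ≠ 0 := by
    have h2 : (2 : ℤ) ≤ (q : ℤ) := by exact_mod_cast hq
    have h3 : (2 : ℤ) ^ d ≤ (q : ℤ) ^ d := pow_le_pow_left₀ (by norm_num) h2 d
    have h4 : (2 : ℤ) ≤ 2 ^ d := by
      calc (2 : ℤ) = 2 ^ 1 := (pow_one 2).symm
      _ ≤ 2 ^ d := pow_le_pow_right₀ (by norm_num) hd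
    omega
  have hTW : ∀ w ∈ W, T w ∈ W := by
    intro w hw
    have hpow : ∀ i : ℕ, (G ^ i) w ∈ W := by
      intro i
      induction i with
      | zero => simpa using hw
      | succ n ih => rw [pow_succ', Module.End.mul_apply]; exact hW _ ih
    rw [hT, LinearMap.sum_apply]
    apply Submodule.sum_mem
    intro i _
    rw [apply_z]
    exact AddSubgroup.zsmul_mem W.toAddSubgroup (hpow i) _
  intro y
  constructor
  · rintro ⟨w, hw, ⟨z, hz⟩, ⟨u, hu, huw⟩⟩
    have h := LinearMap.congr_fun hTδ w
    rw [Module.End.mul_apply, hδ, LinearMap.sub_apply, apply_z, Module.End.one_apply,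
      apply_z, Module.End.one_apply, huw, map_zsmul] at h
    have hTu : T u = w := inj _ hq1 _ _ h
    exact ⟨u, hu, z, by rw [hTu]; exact hz⟩
  · rintro ⟨w, hw, z, hz⟩
    refine ⟨T w, hTW w hw, ⟨z, hz⟩, w, hw, ?_⟩
    have h := LinearMap.congr_fun hδT w
    rw [Module.End.mul_apply, hδ, LinearMap.sub_apply, apply_z, Module.End.one_apply,
      apply_z, Module.End.one_apply] at h
    exact h
end

section
/- Let 1 → A → S̃ → S → 1 be a central extension of a locally compact abelian group S by a finite cyclic group A with faithful character ε : A → ℂ^×, such that the radical Z†(S) of the commutator pairing is open of finite index in S. Let M̃ be a maximal commutative subgroup of S̃ and χ a genuine character of Z(S̃) extended to a character χ̃ of M̃. Then the induced representation Ind_{M̃}^{S̃} χ̃ is irreducible, with central character χ, and its isomorphism class is independent of the choices of M̃ and χ̃; moreover every irreducible representation of S̃ on which Z(S̃) acts by χ is isomorphic to it. -/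
/-- Right-translation representation of a group `G` on the space of functions `G → ℂ`. -/
noncomputable def rho (G : Type*) [Group G] : G →* ((G → ℂ) →ₗ[ℂ] (G → ℂ)) where
  toFun g :=
    { toFun := fun f x => f (x * g)
      map_add' := fun _ _ => rfl
      map_smul' := fun _ _ => rfl }
  map_one' := by
    apply LinearMap.ext; intro f; funext x; simp
  map_mul' := by
    intro g h
    apply LinearMap.ext; intro f; funext x
    show f (x * (g * h)) = f (x * g * h)
    rw [mul_assoc]

/-- The space of the representation induced from the character `χ` of the subgroup `M`:
functions `f : G → ℂ` with `f(mx) = χ(m) f(x)` for `m ∈ M`. -/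
noncomputable def indSpace {G : Type*} [Group G] (M : Subgroup G) (χ : M →* ℂˣ) :
    Submodule ℂ (G → ℂ) where
  carrier := {f | ∀ (m : M) (x : G), f ((m : G) * x) = (χ m : ℂ) * f x}
  add_mem' := by
    intro f g hf hg m x
    simp only [Pi.add_apply, hf m x, hg m x]
    ring
  zero_mem' := by intro m x; simp
  smul_mem' := by
    intro c f hf m x
    simp only [Pi.smul_apply, smul_eq_mul, hf m x]
    ring

open scoped commutatorElement

set_option linter.dupNamespace false
set_option linter.unusedSectionVars false
namespace SvN18
open scoped Classical

variable {G : Type*} [Group G]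

lemma comm_eq (g m : G) : ⁅g, m⁆ = g * m * (m * g)⁻¹ := by group

lemma mul_eq_comm_mul (g m : G) : g * m = ⁅g, m⁆ * (m * g) := by group

lemma comm_mul_left (hc : ∀ x y z : G, z * ⁅x, y⁆ = ⁅x, y⁆ * z) (g₁ g₂ m : G) :
    ⁅g₁ * g₂, m⁆ = ⁅g₁, m⁆ * ⁅g₂, m⁆ := by
  have h1 := mul_eq_comm_mul g₁ m
  have h2 := mul_eq_comm_mul g₂ m
  have key : (g₁ * g₂) * m = (⁅g₁, m⁆ * ⁅g₂, m⁆) * (m * (g₁ * g₂)) := by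
    calc (g₁ * g₂) * m = g₁ * (g₂ * m) := by rw [mul_assoc]
    _ = g₁ * (⁅g₂, m⁆ * (m * g₂)) := by rw [h2]
    _ = (g₁ * ⁅g₂, m⁆) * (m * g₂) := by rw [mul_assoc]
    _ = (⁅g₂, m⁆ * g₁) * (m * g₂) := by rw [hc]
    _ = ⁅g₂, m⁆ * ((g₁ * m) * g₂) := by rw [mul_assoc, ← mul_assoc g₁ m g₂]
    _ = ⁅g₂, m⁆ * ((⁅g₁, m⁆ * (m * g₁)) * g₂) := by rw [h1]
    _ = (⁅g₂, m⁆ * ⁅g₁, m⁆) * (m * (g₁ * g₂)) := by group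
    _ = (⁅g₁, m⁆ * ⁅g₂, m⁆) * (m * (g₁ * g₂)) := by rw [hc g₁ m]
  calc ⁅g₁ * g₂, m⁆ = (g₁ * g₂) * m * (m * (g₁ * g₂))⁻¹ := comm_eq _ _
  _ = (⁅g₁, m⁆ * ⁅g₂, m⁆) * (m * (g₁ * g₂)) * (m * (g₁ * g₂))⁻¹ := by rw [key]
  _ = ⁅g₁, m⁆ * ⁅g₂, m⁆ := by group

lemma comm_mul_right (hc : ∀ x y z : G, z * ⁅x, y⁆ = ⁅x, y⁆ * z) (g m₁ m₂ : G) :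
    ⁅g, m₁ * m₂⁆ = ⁅g, m₁⁆ * ⁅g, m₂⁆ := by
  have : ⁅g, m₁ * m₂⁆ = ⁅m₁ * m₂, g⁆⁻¹ := (commutatorElement_inv _ _).symm
  rw [this, comm_mul_left hc, mul_inv_rev, commutatorElement_inv, commutatorElement_inv,
    hc g m₂]

/-- character sum over a finite group vanishes if the character is nontrivial -/
lemma charSum {Q : Type*} [Group Q] [Fintype Q] (φ : Q → ℂ)
    (hmul : ∀ a b : Q, φ (a * b) = φ a * φ b) (q₀ : Q) (h : φ q₀ ≠ 1) :
    ∑ q : Q, φ q = 0 := by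
  have key : φ q₀ * ∑ q : Q, φ q = 1 * ∑ q : Q, φ q := by
    rw [Finset.mul_sum, one_mul]
    simp_rw [← hmul]
    exact Fintype.sum_equiv (Equiv.mulLeft q₀) _ _ (fun q => rfl)
  by_contra hS
  exact h (mul_right_cancel₀ hS key)

variable {K : Type*} [Group K]

noncomputable def rep (H : Subgroup K) (q : K ⧸ H) : K := Quotient.out q

lemma rep_spec (H : Subgroup K) (q : K ⧸ H) : QuotientGroup.mk (rep H q) = q :=
  QuotientGroup.out_eq' q

lemma rep_rel (H : Subgroup K) (k : K) :
    ∃ h, h ∈ H ∧ rep H (QuotientGroup.mk k) = k * h := by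
  have h2 : k⁻¹ * rep H (QuotientGroup.mk k) ∈ H :=
    QuotientGroup.eq.mp (rep_spec H (QuotientGroup.mk k)).symm
  exact ⟨_, h2, by group⟩

lemma rep_mul_rel (H : Subgroup K) [H.Normal] (q : K ⧸ H) (k₀ : K) :
    ∃ h, h ∈ H ∧ rep H (q * QuotientGroup.mk k₀) = (rep H q * k₀) * h := by
  have h1 : (QuotientGroup.mk (rep H q * k₀) : K ⧸ H) = q * QuotientGroup.mk k₀ := by
    rw [show (QuotientGroup.mk (rep H q * k₀) : K ⧸ H)
        = QuotientGroup.mk (rep H q) * QuotientGroup.mk k₀ from rfl, rep_spec]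
  have h3 : (rep H q * k₀)⁻¹ * rep H (q * QuotientGroup.mk k₀) ∈ H :=
    QuotientGroup.eq.mp (h1.trans (rep_spec H _).symm)
  exact ⟨_, h3, by group⟩

lemma qsum_shift {E : Type*} [AddCommMonoid E] (H : Subgroup K) [H.Normal] [Fintype (K ⧸ H)]
    (W : K → E) (hW : ∀ (k h : K), h ∈ H → W (k * h) = W k) (k₀ : K) :
    ∑ q : K ⧸ H, W (rep H q * k₀) = ∑ q : K ⧸ H, W (rep H q) :=
  Fintype.sum_equiv (Equiv.mulRight (QuotientGroup.mk k₀)) _ _ (fun q => by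
    obtain ⟨h, hh, heq⟩ := rep_mul_rel H q k₀
    show W (rep H q * k₀) = W (rep H (q * QuotientGroup.mk k₀))
    rw [heq, hW _ _ hh])

lemma qsum_char_zero (H : Subgroup K) [H.Normal] [Fintype (K ⧸ H)] (φ : K → ℂ)
    (hmul : ∀ a b : K, φ (a * b) = φ a * φ b) (hH : ∀ h ∈ H, φ h = 1)
    (k₀ : K) (h0 : φ k₀ ≠ 1) : ∑ q : K ⧸ H, φ (rep H q) = 0 := by
  have hinv : ∀ (k h : K), h ∈ H → φ (k * h) = φ k := fun k h hh => by
    rw [hmul, hH h hh, mul_one]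
  apply charSum (fun q => φ (rep H q)) ?_ (QuotientGroup.mk k₀) ?_
  · intro a b
    obtain ⟨h, hh, heq⟩ := rep_mul_rel H a (rep H b)
    rw [rep_spec] at heq
    show φ (rep H (a * b)) = _
    rw [heq, hinv _ _ hh, hmul]
  · obtain ⟨h, hh, heq⟩ := rep_rel H k₀
    show φ (rep H (QuotientGroup.mk k₀)) ≠ 1
    rw [heq, hinv _ _ hh]; exact h0


variable {G : Type*} [Group G]

lemma normalM (A M : Subgroup G) (hcommA : ∀ x y : G, ⁅x, y⁆ ∈ A) (hAM : A ≤ M) :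
    M.Normal := by
  constructor
  intro m hm g
  have h : g * m * g⁻¹ = ⁅g, m⁆ * m := by group
  rw [h]; exact M.mul_mem (hAM (hcommA g m)) hm

lemma hcent' {A : Subgroup G} (hAcent : A ≤ Subgroup.center G)
    (hcommA : ∀ x y : G, ⁅x, y⁆ ∈ A) :
    ∀ x y z : G, z * ⁅x, y⁆ = ⁅x, y⁆ * z := fun x y z =>
  Subgroup.mem_center_iff.mp (hAcent (hcommA x y)) z

/-- The commutator pairing, as a complex number. -/
noncomputable def ep (A : Subgroup G) (hcommA : ∀ x y : G, ⁅x, y⁆ ∈ A) (ε : A →* ℂˣ)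
    (x y : G) : ℂ := (ε ⟨⁅x, y⁆, hcommA x y⟩ : ℂ)

section EP

variable {A : Subgroup G} (hAcent : A ≤ Subgroup.center G)
    (hcommA : ∀ x y : G, ⁅x, y⁆ ∈ A) (ε : A →* ℂˣ)

include hAcent hcommA

lemma ep_mul_left (x x' y : G) :
    ep A hcommA ε (x * x') y = ep A hcommA ε x y * ep A hcommA ε x' y := by
  unfold ep
  rw [show (⟨⁅x * x', y⁆, hcommA _ _⟩ : A) = ⟨⁅x, y⁆, hcommA x y⟩ * ⟨⁅x', y⁆, hcommA x' y⟩
    from Subtype.ext (comm_mul_left (hcent' hAcent hcommA) x x' y), map_mul, Units.val_mul]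

lemma ep_mul_right (x y y' : G) :
    ep A hcommA ε x (y * y') = ep A hcommA ε x y * ep A hcommA ε x y' := by
  unfold ep
  rw [show (⟨⁅x, y * y'⁆, hcommA _ _⟩ : A) = ⟨⁅x, y⁆, hcommA x y⟩ * ⟨⁅x, y'⁆, hcommA x y'⟩
    from Subtype.ext (comm_mul_right (hcent' hAcent hcommA) x y y'), map_mul, Units.val_mul]

lemma ep_comm (x y : G) (h : x * y = y * x) : ep A hcommA ε x y = 1 := by
  unfold ep
  rw [show (⟨⁅x, y⁆, hcommA x y⟩ : A) = 1 from
    Subtype.ext (commutatorElement_eq_one_iff_mul_comm.mpr h), map_one, Units.val_one]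

lemma ep_ne_one (hε : Function.Injective ε) (x y : G) (h : x * y ≠ y * x) :
    ep A hcommA ε x y ≠ 1 := by
  intro hc
  apply h
  have h1 : ε ⟨⁅x, y⁆, hcommA x y⟩ = 1 := Units.val_eq_one.mp hc
  have h2 : (⟨⁅x, y⁆, hcommA x y⟩ : A) = 1 := hε (by rw [h1, map_one])
  exact commutatorElement_eq_one_iff_mul_comm.mp (congrArg Subtype.val h2)

lemma ep_inv_right (x y : G) :
    ep A hcommA ε x y⁻¹ = (ep A hcommA ε x y)⁻¹ := by
  have h1 : ep A hcommA ε x y * ep A hcommA ε x y⁻¹ = 1 := by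
    rw [← ep_mul_right hAcent hcommA ε, show y * y⁻¹ = 1 by group]
    exact ep_comm hAcent hcommA ε x 1 (by group)
  exact eq_inv_of_mul_eq_one_right h1

lemma ep_ne_zero (x y : G) : ep A hcommA ε x y ≠ 0 := Units.ne_zero _

end EP

section Ind

variable {A : Subgroup G} (hAcent : A ≤ Subgroup.center G)
    (hcommA : ∀ x y : G, ⁅x, y⁆ ∈ A) (ε : A →* ℂˣ)
    {M : Subgroup G} (hAM : A ≤ M) (χ' : M →* ℂˣ)
    (hgen : ∀ a : A, χ' ⟨(a : G), hAM a.2⟩ = ε a)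

include hAM hgen in
lemma hgen' : ∀ (c : G) (hc : c ∈ A), χ' ⟨c, hAM hc⟩ = ε ⟨c, hc⟩ := fun c hc => hgen ⟨c, hc⟩

lemma mem_indSpace {f : G → ℂ} :
    f ∈ indSpace M χ' ↔ ∀ (m : M) (x : G), f ((m : G) * x) = (χ' m : ℂ) * f x :=
  Iff.rfl

include hAcent hcommA hAM hgen in
/-- right translation formula for functions in the induced space -/
lemma ind_right {f : G → ℂ} (hf : f ∈ indSpace M χ') (x m : G) (hm : m ∈ M) :
    f (x * m) = ep A hcommA ε x m * (χ' ⟨m, hm⟩ : ℂ) * f x := by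
  have hxm : x * m = (⁅x, m⁆ * m) * x := by rw [mul_eq_comm_mul x m, ← mul_assoc]
  have hmem : ⁅x, m⁆ * m ∈ M := M.mul_mem (hAM (hcommA x m)) hm
  have h1 := hf ⟨_, hmem⟩ x
  have hsplit : (⟨⁅x, m⁆ * m, hmem⟩ : M) = ⟨⁅x, m⁆, hAM (hcommA x m)⟩ * ⟨m, hm⟩ :=
    Subtype.ext rfl
  have h2 : χ' ⟨⁅x, m⁆, hAM (hcommA x m)⟩ = ε ⟨⁅x, m⁆, hcommA x m⟩ :=
    hgen ⟨⁅x, m⁆, hcommA x m⟩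
  rw [hxm, h1, hsplit, map_mul, Units.val_mul, h2]
  rfl

/-- the standard vector: the canonical extension of `χ'` by zero -/
noncomputable def f0 (M : Subgroup G) (χ' : M →* ℂˣ) : G → ℂ :=
  fun x => if h : x ∈ M then (χ' ⟨x, h⟩ : ℂ) else 0

lemma f0_of_mem {x : G} (hx : x ∈ M) : f0 M χ' x = (χ' ⟨x, hx⟩ : ℂ) := by
  unfold f0; exact dif_pos hx

lemma f0_of_not_mem {x : G} (hx : x ∉ M) : f0 M χ' x = 0 := by
  unfold f0; exact dif_neg hx

lemma f0_one : f0 M χ' 1 = 1 := by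
  rw [f0_of_mem χ' M.one_mem]
  rw [show (⟨(1 : G), M.one_mem⟩ : M) = 1 from rfl, map_one, Units.val_one]

lemma f0_mem : f0 M χ' ∈ indSpace M χ' := by
  intro m x
  by_cases hx : x ∈ M
  · have hmx : (m : G) * x ∈ M := M.mul_mem m.2 hx
    rw [f0_of_mem χ' hx, f0_of_mem χ' hmx]
    rw [show (⟨(m : G) * x, hmx⟩ : M) = m * ⟨x, hx⟩ from rfl, map_mul, Units.val_mul]
  · have hmx : (m : G) * x ∉ M := fun h => hx (by
      have h2 := M.mul_mem (M.inv_mem m.2) h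
      rwa [inv_mul_cancel_left] at h2)
    rw [f0_of_not_mem χ' hx, f0_of_not_mem χ' hmx, mul_zero]

lemma rho_stab (g : G) {f : G → ℂ} (hf : f ∈ indSpace M χ') :
    rho G g f ∈ indSpace M χ' := by
  intro m x
  show f ((m : G) * x * g) = (χ' m : ℂ) * f (x * g)
  rw [mul_assoc]
  exact hf m (x * g)

lemma rho_central (hZM : Subgroup.center G ≤ M) (z : G) (hz : z ∈ Subgroup.center G)
    {f : G → ℂ} (hf : f ∈ indSpace M χ') :
    rho G z f = ((χ' ⟨z, hZM hz⟩ : ℂˣ) : ℂ) • f := by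
  funext x
  show f (x * z) = _
  rw [show x * z = z * x from Subgroup.mem_center_iff.mp hz x]
  have := hf ⟨z, hZM hz⟩ x
  rw [this]
  rfl

end Ind

lemma mem_of_forall_comm (M : Subgroup G)
    (hMcomm : ∀ x ∈ M, ∀ y ∈ M, x * y = y * x)
    (hMmax : ∀ M' : Subgroup G, M ≤ M' → (∀ x ∈ M', ∀ y ∈ M', x * y = y * x) → M' = M)
    {x : G} (h : ∀ m ∈ M, x * m = m * x) : x ∈ M := by
  set s : Set G := insert x (M : Set G) with hs
  have hsub : ∀ y ∈ s, ∀ z ∈ s, y * z = z * y := by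
    intro y hy z hz
    rcases hy with rfl | hy <;> rcases hz with rfl | hz
    · rfl
    · exact h z hz
    · exact (h y hy).symm
    · exact hMcomm y hy z hz
  have hs_sub : s ⊆ ↑(Subgroup.centralizer s) := by
    intro y hy
    rw [SetLike.mem_coe, Subgroup.mem_centralizer_iff]
    intro g hg
    exact hsub g hg y hy
  have h1 : Subgroup.closure s ≤ Subgroup.centralizer s := (Subgroup.closure_le _).mpr hs_sub
  have hle : M ≤ Subgroup.closure s := fun y hy =>
    Subgroup.subset_closure (Set.mem_insert_of_mem _ hy)
  have hcomm' : ∀ y ∈ Subgroup.closure s, ∀ z ∈ Subgroup.closure s, y * z = z * y := by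
    intro y hy z hz
    have hk := Subgroup.closure_le_centralizer_centralizer s
    exact (Subgroup.mem_centralizer_iff.mp (hk hy) z (h1 hz)).symm
  have hMM := hMmax _ hle hcomm'
  rw [← hMM]
  exact Subgroup.subset_closure (Set.mem_insert x _)

theorem irred
    (A : Subgroup G)
    (hAcent : A ≤ Subgroup.center G)
    (hcommA : ∀ x y : G, ⁅x, y⁆ ∈ A)
    (ε : A →* ℂˣ) (hε : Function.Injective ε)
    (hZfin : (Subgroup.center G).FiniteIndex)
    (M : Subgroup G)
    (hMcomm : ∀ x ∈ M, ∀ y ∈ M, x * y = y * x)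
    (hMmax : ∀ M' : Subgroup G, M ≤ M' → (∀ x ∈ M', ∀ y ∈ M', x * y = y * x) → M' = M)
    (hZM : Subgroup.center G ≤ M) (hAM : A ≤ M)
    (χ' : M →* ℂˣ)
    (hgen : ∀ a : A, χ' ⟨(a : G), hAM a.2⟩ = ε a) :
    ∀ U : Submodule ℂ (G → ℂ), U ≤ indSpace M χ' →
      (∀ g : G, ∀ f ∈ U, rho G g f ∈ U) → U = ⊥ ∨ U = indSpace M χ' := by
  intro U hUle hUinv
  by_cases hU : U = ⊥
  · exact Or.inl hU
  right
  haveI := hZfin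
  haveI hMnormal : M.Normal := normalM A M hcommA hAM
  haveI hMfin : M.FiniteIndex := Subgroup.finiteIndex_of_le hZM
  set Z' : Subgroup M := (Subgroup.center G).subgroupOf M with hZ'
  haveI : Z'.Normal := by
    constructor
    intro z hz m
    rw [hZ', Subgroup.mem_subgroupOf] at hz ⊢
    show ((m : G) * (z : G) * ((m : G))⁻¹) ∈ Subgroup.center G
    rw [Subgroup.mem_center_iff.mp hz (m : G), mul_inv_cancel_right]
    exact hz
  haveI : Fintype (M ⧸ Z') := Fintype.ofFinite _
  haveI : Fintype (G ⧸ M) := Fintype.ofFinite _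
  obtain ⟨f, hfU, hfne⟩ := (Submodule.ne_bot_iff U).mp hU
  obtain ⟨x₀, hx₀⟩ : ∃ x, f x ≠ 0 := by
    by_contra hcon; push_neg at hcon; exact hfne (funext hcon)
  set g : G → ℂ := rho G x₀ f with hgdef
  have hgU : g ∈ U := hUinv x₀ f hfU
  have hgInd : g ∈ indSpace M χ' := hUle hgU
  have hg1 : g 1 = f x₀ := by show f (1 * x₀) = f x₀; rw [one_mul]
  set T : M → (G → ℂ) := fun m => (((χ' m)⁻¹ : ℂˣ) : ℂ) • rho G (m : G) g with hTdef
  have hTU : ∀ m : M, T m ∈ U := fun m => U.smul_mem _ (hUinv _ _ hgU)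
  set Pg : G → ℂ := ∑ q : M ⧸ Z', T (rep Z' q) with hPgdef
  have hPgU : Pg ∈ U := Submodule.sum_mem U (fun q _ => hTU _)
  have hT : ∀ (m : M) (x : G), T m x = ep A hcommA ε x (m : G) * g x := by
    intro m x
    have h1 := ind_right hAcent hcommA ε hAM χ' hgen hgInd x (m : G) m.2
    show (((χ' m)⁻¹ : ℂˣ) : ℂ) * g (x * (m : G)) = _
    have h2 : (⟨(m : G), m.2⟩ : M) = m := Subtype.ext rfl
    rw [h1, h2, Units.val_inv_eq_inv_val]
    have h3 : (χ' m : ℂ) ≠ 0 := Units.ne_zero _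
    field_simp
  have hPg : ∀ x : G, Pg x =
      (if x ∈ M then (Fintype.card (M ⧸ Z') : ℂ) * g x else 0) := by
    intro x
    have hPx : Pg x = ∑ q : M ⧸ Z', ep A hcommA ε x ((rep Z' q : M) : G) * g x := by
      rw [hPgdef, Finset.sum_apply]
      exact Finset.sum_congr rfl (fun q _ => hT _ x)
    by_cases hx : x ∈ M
    · rw [hPx, if_pos hx, ← Finset.sum_mul]
      congr 1
      rw [show ((Fintype.card (M ⧸ Z') : ℂ)) = ∑ _q : M ⧸ Z', (1 : ℂ) by
        rw [Finset.sum_const, Finset.card_univ, nsmul_eq_mul, mul_one]]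
      exact Finset.sum_congr rfl
        (fun q _ => ep_comm hAcent hcommA ε _ _ (hMcomm x hx _ (rep Z' q).2))
    · rw [hPx, if_neg hx, ← Finset.sum_mul]
      have hex : ∃ m₁ : G, m₁ ∈ M ∧ x * m₁ ≠ m₁ * x := by
        by_contra hall; push_neg at hall
        exact hx (mem_of_forall_comm M hMcomm hMmax (fun m hm => hall m hm))
      obtain ⟨m₁, hm₁M, hm₁⟩ := hex
      have hzero : ∑ q : M ⧸ Z', ep A hcommA ε x ((rep Z' q : M) : G) = 0 := by
        apply qsum_char_zero Z' (fun m : M => ep A hcommA ε x (m : G)) ?_ ?_ ⟨m₁, hm₁M⟩ ?_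
        · intro a b
          exact ep_mul_right hAcent hcommA ε x _ _
        · intro hh hmem
          rw [hZ', Subgroup.mem_subgroupOf] at hmem
          exact ep_comm hAcent hcommA ε x _ (Subgroup.mem_center_iff.mp hmem x)
        · exact ep_ne_one hAcent hcommA ε hε x m₁ hm₁
      rw [hzero, zero_mul]
  have hPg_eq : Pg = ((Fintype.card (M ⧸ Z') : ℂ) * g 1) • f0 M χ' := by
    funext x
    rw [hPg x]
    by_cases hx : x ∈ M
    · rw [if_pos hx]
      show _ = ((Fintype.card (M ⧸ Z') : ℂ) * g 1) * f0 M χ' x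
      rw [f0_of_mem χ' hx]
      have h1 := hgInd ⟨x, hx⟩ 1
      rw [show ((⟨x, hx⟩ : M) : G) * 1 = x by rw [mul_one]] at h1
      rw [h1]; ring
    · rw [if_neg hx]
      show (0 : ℂ) = ((Fintype.card (M ⧸ Z') : ℂ) * g 1) * f0 M χ' x
      rw [f0_of_not_mem χ' hx, mul_zero]
  have hcard_ne : ((Fintype.card (M ⧸ Z') : ℂ)) ≠ 0 :=
    Nat.cast_ne_zero.mpr Fintype.card_ne_zero
  have hc0 : (Fintype.card (M ⧸ Z') : ℂ) * g 1 ≠ 0 :=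
    mul_ne_zero hcard_ne (by rw [hg1]; exact hx₀)
  have hf0U : f0 M χ' ∈ U := by
    have h2 := U.smul_mem ((Fintype.card (M ⧸ Z') : ℂ) * g 1)⁻¹ hPgU
    rw [hPg_eq, smul_smul, inv_mul_cancel₀ hc0, one_smul] at h2
    exact h2
  refine le_antisymm hUle ?_
  intro h hhInd
  have hsum : h = ∑ p : G ⧸ M, h (rep M p) • rho G (rep M p)⁻¹ (f0 M χ') := by
    funext x
    rw [Finset.sum_apply]
    have hothers : ∀ p ∈ Finset.univ, p ≠ (QuotientGroup.mk x : G ⧸ M) →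
        (h (rep M p) • rho G (rep M p)⁻¹ (f0 M χ')) x = 0 := by
      intro p _ hp
      have hnot : x * (rep M p)⁻¹ ∉ M := by
        intro hmem
        apply hp
        have h3 : (rep M p)⁻¹ * (x * (rep M p)⁻¹) * (rep M p) ∈ M :=
          hMnormal.conj_mem' _ hmem _
        have h4 : (rep M p)⁻¹ * x ∈ M := by
          have heq : (rep M p)⁻¹ * (x * (rep M p)⁻¹) * (rep M p) = (rep M p)⁻¹ * x := by
            group
          rwa [heq] at h3
        rw [← rep_spec M p]
        exact QuotientGroup.eq.mpr h4
      show h (rep M p) * f0 M χ' (x * (rep M p)⁻¹) = 0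
      rw [f0_of_not_mem χ' hnot, mul_zero]
    have hmain : (h (rep M (QuotientGroup.mk x)) •
        rho G (rep M (QuotientGroup.mk x))⁻¹ (f0 M χ')) x = h x := by
      obtain ⟨m, hmM, hout⟩ := rep_rel M x
      rw [hout]
      show h (x * m) * f0 M χ' (x * (x * m)⁻¹) = h x
      have hw : x * (x * m)⁻¹ = x * m⁻¹ * x⁻¹ := by group
      have hwM : x * m⁻¹ * x⁻¹ ∈ M := hMnormal.conj_mem _ (M.inv_mem hmM) x
      rw [hw, f0_of_mem χ' hwM]
      have hsplit : x * m⁻¹ * x⁻¹ = ⁅x, m⁻¹⁆ * m⁻¹ := by group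
      have hval : (χ' ⟨x * m⁻¹ * x⁻¹, hwM⟩ : ℂ) =
          ep A hcommA ε x m⁻¹ * (χ' ⟨m⁻¹, M.inv_mem hmM⟩ : ℂ) := by
        have he : (⟨x * m⁻¹ * x⁻¹, hwM⟩ : M) =
            ⟨⁅x, m⁻¹⁆, hAM (hcommA x m⁻¹)⟩ * ⟨m⁻¹, M.inv_mem hmM⟩ := Subtype.ext hsplit
        rw [he, map_mul, Units.val_mul]
        congr 1
        exact congrArg Units.val (hgen ⟨⁅x, m⁻¹⁆, hcommA x m⁻¹⟩)
      have hh1 := ind_right hAcent hcommA ε hAM χ' hgen hhInd x m hmM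
      rw [hh1, hval]
      have hepinv := ep_inv_right hAcent hcommA ε x m
      have hchi : (χ' ⟨m⁻¹, M.inv_mem hmM⟩ : ℂ) = ((χ' ⟨m, hmM⟩)⁻¹ : ℂˣ) := by
        rw [show (⟨m⁻¹, M.inv_mem hmM⟩ : M) = (⟨m, hmM⟩ : M)⁻¹ from Subtype.ext rfl, map_inv]
      rw [hepinv, hchi, Units.val_inv_eq_inv_val]
      have hep0 := ep_ne_zero hAcent hcommA ε x m
      have hch0 : (χ' ⟨m, hmM⟩ : ℂ) ≠ 0 := Units.ne_zero _
      field_simp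
    rw [Finset.sum_eq_single_of_mem (QuotientGroup.mk x) (Finset.mem_univ _) hothers, hmain]
  have hin : (∑ p : G ⧸ M, h (rep M p) • rho G (rep M p)⁻¹ (f0 M χ')) ∈ U :=
    Submodule.sum_mem U (fun p _ => Submodule.smul_mem U _ (hUinv _ _ hf0U))
  rwa [← hsum] at hin

lemma center_subgroupOf_normal (M : Subgroup G) : ((Subgroup.center G).subgroupOf M).Normal := by
  constructor
  intro z hz m
  rw [Subgroup.mem_subgroupOf] at hz ⊢
  show ((m : G) * (z : G) * ((m : G))⁻¹) ∈ Subgroup.center G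
  rw [Subgroup.mem_center_iff.mp hz (m : G), mul_inv_cancel_right]
  exact hz

theorem univ
    (A : Subgroup G)
    (hAcent : A ≤ Subgroup.center G)
    (hcommA : ∀ x y : G, ⁅x, y⁆ ∈ A)
    (ε : A →* ℂˣ) (hε : Function.Injective ε)
    (hZfin : (Subgroup.center G).FiniteIndex)
    (M : Subgroup G)
    (hMcomm : ∀ x ∈ M, ∀ y ∈ M, x * y = y * x)
    (hMmax : ∀ M' : Subgroup G, M ≤ M' → (∀ x ∈ M', ∀ y ∈ M', x * y = y * x) → M' = M)
    (hZM : Subgroup.center G ≤ M) (hAM : A ≤ M)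
    (χ' : M →* ℂˣ)
    (hgen : ∀ a : A, χ' ⟨(a : G), hAM a.2⟩ = ε a) :
    ∀ (V : Type*) (_ : AddCommGroup V) (_ : Module ℂ V) (π : G →* (V →ₗ[ℂ] V)),
      Nontrivial V →
      (∀ U : Submodule ℂ V, (∀ g : G, ∀ v ∈ U, π g v ∈ U) → U = ⊥ ∨ U = ⊤) →
      (∀ (z : G) (hz : z ∈ Subgroup.center G),
        π z = ((χ' ⟨z, hZM hz⟩ : ℂˣ) : ℂ) • (1 : V →ₗ[ℂ] V)) →
      ∃ T : V →ₗ[ℂ] (G → ℂ), Function.Injective T ∧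
        LinearMap.range T = indSpace M χ' ∧
        ∀ (g : G) (v : V), T (π g v) = rho G g (T v) := by
  intro V _ _ π hVnt hVirr hVcent
  haveI := hZfin
  haveI hMnormal : M.Normal := normalM A M hcommA hAM
  haveI hMfin : M.FiniteIndex := Subgroup.finiteIndex_of_le hZM
  set Z' : Subgroup M := (Subgroup.center G).subgroupOf M with hZ'
  haveI : Z'.Normal := center_subgroupOf_normal M
  haveI : Fintype (M ⧸ Z') := Fintype.ofFinite _
  haveI : Fintype (G ⧸ M) := Fintype.ofFinite _
  have hcent2 : ∀ (c : G) (hc : c ∈ A), π c = ((ε ⟨c, hc⟩ : ℂˣ) : ℂ) • (1 : V →ₗ[ℂ] V) := by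
    intro c hc
    have h1 := hVcent c (hAcent hc)
    rw [h1]
    congr 1
    exact congrArg Units.val (hgen ⟨c, hc⟩)
  set F : M → (V →ₗ[ℂ] V) := fun m => (((χ' m)⁻¹ : ℂˣ) : ℂ) • π (m : G) with hF
  have hFinv : ∀ (m z : M), z ∈ Z' → F (m * z) = F m := by
    intro m z hzz
    rw [hZ', Subgroup.mem_subgroupOf] at hzz
    have h1 : π ((z : G)) = ((χ' z : ℂˣ) : ℂ) • (1 : V →ₗ[ℂ] V) := by
      have h2 := hVcent (z : G) hzz
      rwa [show (⟨(z : G), hZM hzz⟩ : M) = z from Subtype.ext rfl] at h2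
    have hc1 : (((χ' z)⁻¹ : ℂˣ) : ℂ) * ((χ' z : ℂˣ) : ℂ) = 1 := by
      rw [← Units.val_mul, inv_mul_cancel, Units.val_one]
    calc F (m * z) = (((χ' (m * z))⁻¹ : ℂˣ) : ℂ) • π ((m : G) * (z : G)) := rfl
    _ = (((((χ' m)⁻¹ : ℂˣ) : ℂ)) * ((((χ' z)⁻¹ : ℂˣ)) : ℂ)) •
        (((χ' z : ℂˣ) : ℂ) • π (m : G)) := by
      rw [map_mul π, map_mul χ', mul_inv_rev, Units.val_mul, h1, mul_smul_comm, mul_one,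
        mul_comm ((((χ' z)⁻¹ : ℂˣ)) : ℂ)]
    _ = F m := by
      rw [smul_smul, mul_assoc, hc1, mul_one]
  set P : V →ₗ[ℂ] V := ∑ q : M ⧸ Z', F (rep Z' q) with hP
  have hPm : ∀ m : M, P * π (m : G) = ((χ' m : ℂˣ) : ℂ) • P := by
    intro m
    have hterm : ∀ n : M, F n * π (m : G) = ((χ' m : ℂˣ) : ℂ) • F (n * m) := by
      intro n
      show ((((χ' n)⁻¹ : ℂˣ) : ℂ) • π (n : G)) * π (m : G) = _
      rw [smul_mul_assoc, ← map_mul π]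
      show _ = ((χ' m : ℂˣ) : ℂ) • ((((χ' (n * m))⁻¹ : ℂˣ) : ℂ) • π ((n : G) * (m : G)))
      rw [smul_smul, map_mul χ', mul_inv_rev, Units.val_mul]
      congr 1
      rw [← mul_assoc, Units.mul_inv, one_mul]
    rw [hP, Finset.sum_mul, Finset.smul_sum]
    rw [Finset.sum_congr rfl (fun q _ => hterm (rep Z' q))]
    rw [← Finset.smul_sum, qsum_shift Z' F (fun k h hh => hFinv k h hh) m, Finset.smul_sum]
  have hconj : ∀ (g : G) (n : M),
      π g * π (n : G) * π g⁻¹ = (ep A hcommA ε g (n : G)) • π (n : G) := by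
    intro g n
    rw [← map_mul π, ← map_mul π]
    have h1 : g * (n : G) * g⁻¹ = ⁅g, (n : G)⁆ * (n : G) := by group
    rw [h1, map_mul π, hcent2 _ (hcommA g (n : G)), smul_mul_assoc, one_mul]
    rfl
  set L : V →ₗ[ℂ] V := ∑ p : G ⧸ M, π (rep M p) * P * π (rep M p)⁻¹ with hL
  have hexp : ∀ pg : G, π pg * P * π pg⁻¹
      = ∑ q : M ⧸ Z', (ep A hcommA ε pg ((rep Z' q : M) : G)) • F (rep Z' q) := by
    intro pg
    rw [hP, Finset.mul_sum, Finset.sum_mul]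
    apply Finset.sum_congr rfl
    intro q _
    show π pg * F (rep Z' q) * π pg⁻¹ = _
    set n := rep Z' q with hn
    show π pg * (((((χ' n)⁻¹ : ℂˣ)) : ℂ) • π (n : G)) * π pg⁻¹ = _
    rw [mul_smul_comm, smul_mul_assoc, hconj pg n]
    show ((((χ' n)⁻¹ : ℂˣ)) : ℂ) • ((ep A hcommA ε pg (n : G)) • π (n : G)) = _
    rw [smul_smul, mul_comm, ← smul_smul]
  have hcard1 : ((Fintype.card (G ⧸ M) : ℂ)) = ∑ _p : G ⧸ M, (1 : ℂ) := by
    rw [Finset.sum_const, Finset.card_univ, nsmul_eq_mul, mul_one]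
  have hF1 : F (rep Z' (1 : M ⧸ Z')) = (1 : V →ₗ[ℂ] V) := by
    have h5 : rep Z' (1 : M ⧸ Z') ∈ Z' := (QuotientGroup.eq_one_iff _).mp (rep_spec Z' 1)
    have h5' : ((rep Z' (1 : M ⧸ Z') : M) : G) ∈ Subgroup.center G :=
      Subgroup.mem_subgroupOf.mp h5
    have h6 : π ((rep Z' (1 : M ⧸ Z') : M) : G)
        = ((χ' (rep Z' (1 : M ⧸ Z')) : ℂˣ) : ℂ) • (1 : V →ₗ[ℂ] V) := by
      have h7 := hVcent _ h5'
      rwa [show (⟨((rep Z' (1 : M ⧸ Z') : M) : G), hZM h5'⟩ : M) = rep Z' (1 : M ⧸ Z')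
        from Subtype.ext rfl] at h7
    show ((((χ' (rep Z' (1 : M ⧸ Z')))⁻¹ : ℂˣ)) : ℂ) • π ((rep Z' (1 : M ⧸ Z') : M) : G) = _
    rw [h6, smul_smul, ← Units.val_mul, inv_mul_cancel, Units.val_one, one_smul]
  have hinner : ∀ q : M ⧸ Z', (∑ p : G ⧸ M, ep A hcommA ε (rep M p) ((rep Z' q : M) : G))
      = if q = 1 then (Fintype.card (G ⧸ M) : ℂ) else 0 := by
    intro q
    by_cases hq1 : q = 1
    · rw [if_pos hq1, hq1, hcard1]
      have h5 : rep Z' (1 : M ⧸ Z') ∈ Z' := (QuotientGroup.eq_one_iff _).mp (rep_spec Z' 1)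
      have hz1 : ((rep Z' (1 : M ⧸ Z') : M) : G) ∈ Subgroup.center G :=
        Subgroup.mem_subgroupOf.mp h5
      exact Finset.sum_congr rfl (fun p _ =>
        ep_comm hAcent hcommA ε _ _ (Subgroup.mem_center_iff.mp hz1 _))
    · rw [if_neg hq1]
      have hnc : ((rep Z' q : M) : G) ∉ Subgroup.center G := by
        intro hc
        apply hq1
        rw [← rep_spec Z' q]
        exact (QuotientGroup.eq_one_iff _).mpr (Subgroup.mem_subgroupOf.mpr hc)
      obtain ⟨g₀, hg₀⟩ : ∃ g₀ : G,
          ¬(g₀ * ((rep Z' q : M) : G) = ((rep Z' q : M) : G) * g₀) := by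
        by_contra hall; push_neg at hall
        exact hnc (Subgroup.mem_center_iff.mpr hall)
      apply qsum_char_zero M (fun g : G => ep A hcommA ε g ((rep Z' q : M) : G)) ?_ ?_ g₀
        (ep_ne_one hAcent hcommA ε hε _ _ hg₀)
      · intro a b; exact ep_mul_left hAcent hcommA ε a b _
      · intro hh hmem
        exact ep_comm hAcent hcommA ε _ _ (hMcomm _ hmem _ (rep Z' q).2)
  have hLcard : L = ((Fintype.card (G ⧸ M) : ℂ)) • (1 : V →ₗ[ℂ] V) := by
    calc L = ∑ p : G ⧸ M, ∑ q : M ⧸ Z',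
          (ep A hcommA ε (rep M p) ((rep Z' q : M) : G)) • F (rep Z' q) := by
          rw [hL]; exact Finset.sum_congr rfl (fun p _ => hexp (rep M p))
    _ = ∑ q : M ⧸ Z', ∑ p : G ⧸ M,
          (ep A hcommA ε (rep M p) ((rep Z' q : M) : G)) • F (rep Z' q) := Finset.sum_comm
    _ = ∑ q : M ⧸ Z',
          (∑ p : G ⧸ M, ep A hcommA ε (rep M p) ((rep Z' q : M) : G)) • F (rep Z' q) :=
          Finset.sum_congr rfl (fun q _ => (Finset.sum_smul).symm)
    _ = ∑ q : M ⧸ Z',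
          (if q = 1 then (Fintype.card (G ⧸ M) : ℂ) else 0) • F (rep Z' q) :=
          Finset.sum_congr rfl (fun q _ => by rw [hinner q])
    _ = ((Fintype.card (G ⧸ M) : ℂ)) • (1 : V →ₗ[ℂ] V) := by
          rw [Finset.sum_eq_single_of_mem (1 : M ⧸ Z') (Finset.mem_univ _)
            (fun q _ hq1 => by rw [if_neg hq1, zero_smul])]
          rw [if_pos rfl, hF1]
  obtain ⟨u, hu⟩ := exists_ne (0 : V)
  have hPne : P ≠ 0 := by
    intro hP0
    have hL0 : L = 0 := by
      rw [hL]
      apply Finset.sum_eq_zero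
      intro p _
      rw [hP0, mul_zero, zero_mul]
    rw [hLcard] at hL0
    have h8 := LinearMap.ext_iff.mp hL0 u
    have h7 : (Fintype.card (G ⧸ M) : ℂ) • u = 0 := by simpa using h8
    rcases smul_eq_zero.mp h7 with h9 | h9
    · exact (Nat.cast_ne_zero.mpr Fintype.card_ne_zero) h9
    · exact hu h9
  obtain ⟨v₀, hv₀⟩ : ∃ v₀, P v₀ ≠ 0 := by
    by_contra hall; push_neg at hall
    exact hPne (LinearMap.ext fun v => by simp [hall v])
  obtain ⟨μ, hμ⟩ : ∃ μ : Module.Dual ℂ V, μ (P v₀) ≠ 0 := by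
    by_contra hall; push_neg at hall
    exact hv₀ ((Module.forall_dual_apply_eq_zero_iff ℂ (P v₀)).mp hall)
  set lam : V →ₗ[ℂ] ℂ := μ ∘ₗ P with hlamdef
  have hlam : ∀ (m : M) (v : V), lam (π (m : G) v) = ((χ' m : ℂˣ) : ℂ) * lam v := by
    intro m v
    have h1 : P (π (m : G) v) = ((χ' m : ℂˣ) : ℂ) • P v := LinearMap.ext_iff.mp (hPm m) v
    show μ (P (π (m : G) v)) = _
    rw [h1, map_smul, smul_eq_mul]
    rfl
  set T : V →ₗ[ℂ] (G → ℂ) :=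
    { toFun := fun v x => lam (π x v)
      map_add' := by intro v w; funext x; simp
      map_smul' := by intro c v; funext x; simp } with hTdef
  have hTapp : ∀ v x, T v x = lam (π x v) := fun v x => rfl
  have hTind : ∀ v, T v ∈ indSpace M χ' := by
    intro v m x
    show lam (π ((m : G) * x) v) = _
    rw [map_mul π]
    show lam (π (m : G) (π x v)) = _
    rw [hlam m (π x v)]
    rfl
  have hTint : ∀ (g : G) (v : V), T (π g v) = rho G g (T v) := by
    intro g v
    funext x
    show lam (π x (π g v)) = lam (π (x * g) v)
    rw [map_mul π]
    rfl
  have hTv₀ : T v₀ ≠ 0 := by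
    intro h0
    have h1 : T v₀ 1 = 0 := by rw [h0]; rfl
    rw [hTapp, map_one π] at h1
    exact hμ h1
  have hinj : Function.Injective T := by
    rw [← LinearMap.ker_eq_bot]
    have hkerinv : ∀ g : G, ∀ v ∈ LinearMap.ker T, π g v ∈ LinearMap.ker T := by
      intro g v hv
      rw [LinearMap.mem_ker] at hv ⊢
      rw [hTint, hv, map_zero]
    rcases hVirr (LinearMap.ker T) hkerinv with hbot | htop
    · exact hbot
    · exfalso
      have hmem : v₀ ∈ LinearMap.ker T := htop ▸ Submodule.mem_top
      exact hTv₀ (LinearMap.mem_ker.mp hmem)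
  have hrange : LinearMap.range T = indSpace M χ' := by
    have h1 : LinearMap.range T ≤ indSpace M χ' := by
      rintro f ⟨v, rfl⟩; exact hTind v
    have h2 : ∀ g : G, ∀ f ∈ LinearMap.range T, rho G g f ∈ LinearMap.range T := by
      rintro g f ⟨v, rfl⟩
      exact ⟨π g v, hTint g v⟩
    rcases irred A hAcent hcommA ε hε hZfin M hMcomm hMmax hZM hAM χ' hgen
        (LinearMap.range T) h1 h2 with hbot | heq
    · exfalso
      have hmem : T v₀ ∈ LinearMap.range T := LinearMap.mem_range_self T v₀
      rw [hbot] at hmem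
      exact hTv₀ ((Submodule.mem_bot ℂ).mp hmem)
    · exact heq
  exact ⟨T, hinj, hrange, hTint⟩

end SvN18

/-- Stone–von Neumann for metaplectic tori: Let `1 → A → S̃ → S → 1` be a
central extension of an abelian group `S = S̃/A` by a finite cyclic group `A` with
faithful character `ε`, such that the center `Z(S̃)` (the preimage of the radical
`Z†(S)`) has finite index. Let `M̃` be a maximal commutative subgroup and `χ̃ : M̃ → ℂˣ`
a genuine character (extending a genuine character `χ` of `Z(S̃)`). Then the induced
representation `Ind_{M̃}^{S̃} χ̃` is irreducible, has central character `χ`, its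
isomorphism class is independent of the choices of `M̃` and `χ̃`, and every irreducible
representation on which `Z(S̃)` acts by `χ` is isomorphic to it. -/
theorem stmt18 {G : Type*} [Group G]
    (A : Subgroup G) [Finite A] (hcyc : IsCyclic A)
    (hAcent : A ≤ Subgroup.center G)
    (hcommA : ∀ x y : G, ⁅x, y⁆ ∈ A)
    (ε : A →* ℂˣ) (hε : Function.Injective ε)
    (hZfin : (Subgroup.center G).FiniteIndex)
    (M : Subgroup G)
    (hMcomm : ∀ x ∈ M, ∀ y ∈ M, x * y = y * x)
    (hMmax : ∀ M' : Subgroup G, M ≤ M' → (∀ x ∈ M', ∀ y ∈ M', x * y = y * x) → M' = M)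
    (hZM : Subgroup.center G ≤ M) (hAM : A ≤ M)
    (χ' : M →* ℂˣ)
    (hgen : ∀ a : A, χ' ⟨(a : G), hAM a.2⟩ = ε a) :
    -- the induced space is stable under right translation
    (∀ g : G, ∀ f ∈ indSpace M χ', rho G g f ∈ indSpace M χ') ∧
    -- (1) irreducibility of the induced representation
    (∀ U : Submodule ℂ (G → ℂ), U ≤ indSpace M χ' →
      (∀ g : G, ∀ f ∈ U, rho G g f ∈ U) → U = ⊥ ∨ U = indSpace M χ') ∧
    -- (2) the center acts by the central character χ = χ̃|_{Z(S̃)}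
    (∀ (z : G) (hz : z ∈ Subgroup.center G), ∀ f ∈ indSpace M χ',
      rho G z f = ((χ' ⟨z, hZM hz⟩ : ℂˣ) : ℂ) • f) ∧
    -- (3) independence of the choices of M̃ and χ̃: any other choice with the same
    -- restriction to the center yields an isomorphic representation
    (∀ M₂ : Subgroup G, (∀ x ∈ M₂, ∀ y ∈ M₂, x * y = y * x) →
      (∀ M' : Subgroup G, M₂ ≤ M' → (∀ x ∈ M', ∀ y ∈ M', x * y = y * x) → M' = M₂) →
      ∀ (hZM₂ : Subgroup.center G ≤ M₂) (χ₂ : M₂ →* ℂˣ),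
        (∀ (z : G) (hz : z ∈ Subgroup.center G), χ₂ ⟨z, hZM₂ hz⟩ = χ' ⟨z, hZM hz⟩) →
        ∃ T : (G → ℂ) →ₗ[ℂ] (G → ℂ),
          Submodule.map T (indSpace M χ') = indSpace M₂ χ₂ ∧
          Set.InjOn T (indSpace M χ' : Set (G → ℂ)) ∧
          ∀ g : G, ∀ f ∈ indSpace M χ', T (rho G g f) = rho G g (T f)) ∧
    -- (4) any irreducible representation on which the center acts by χ is isomorphic to
    -- the induced representation
    (∀ (V : Type) (_ : AddCommGroup V) (_ : Module ℂ V) (π : G →* (V →ₗ[ℂ] V)),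
      Nontrivial V →
      (∀ U : Submodule ℂ V, (∀ g : G, ∀ v ∈ U, π g v ∈ U) → U = ⊥ ∨ U = ⊤) →
      (∀ (z : G) (hz : z ∈ Subgroup.center G),
        π z = ((χ' ⟨z, hZM hz⟩ : ℂˣ) : ℂ) • (1 : V →ₗ[ℂ] V)) →
      ∃ T : V →ₗ[ℂ] (G → ℂ), Function.Injective T ∧
        LinearMap.range T = indSpace M χ' ∧
        ∀ (g : G) (v : V), T (π g v) = rho G g (T v)) := by
  refine ⟨?_, ?_, ?_, ?_, ?_⟩
  · intro g f hf
    exact SvN18.rho_stab χ' g hf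
  · exact SvN18.irred A hAcent hcommA ε hε hZfin M hMcomm hMmax hZM hAM χ' hgen
  · intro z hz f hf
    exact SvN18.rho_central χ' hZM z hz hf
  · intro M₂ hM₂comm hM₂max hZM₂ χ₂ hagree
    have hAM₂ : A ≤ M₂ := le_trans hAcent hZM₂
    have hgen₂ : ∀ a : A, χ₂ ⟨(a : G), hAM₂ a.2⟩ = ε a := by
      intro a
      have h1 : χ₂ ⟨(a : G), hZM₂ (hAcent a.2)⟩ = χ' ⟨(a : G), hZM (hAcent a.2)⟩ :=
        hagree (a : G) (hAcent a.2)
      calc χ₂ ⟨(a : G), hAM₂ a.2⟩ = χ' ⟨(a : G), hZM (hAcent a.2)⟩ := h1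
      _ = ε a := hgen a
    set V := ↥(indSpace M χ') with hV
    set π : G →* (V →ₗ[ℂ] V) :=
      { toFun := fun g => (rho G g).restrict (fun f hf => SvN18.rho_stab χ' g hf)
        map_one' := by
          apply LinearMap.ext; intro v; apply Subtype.ext
          show (rho G 1) (v : G → ℂ) = ((1 : V →ₗ[ℂ] V) v : G → ℂ)
          rw [map_one]; rfl
        map_mul' := by
          intro g h
          apply LinearMap.ext; intro v; apply Subtype.ext
          show (rho G (g * h)) (v : G → ℂ) = (rho G g) ((rho G h) (v : G → ℂ))
          rw [map_mul]; rfl } with hπ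
    have hπapp : ∀ (g : G) (v : V), ((π g v : V) : G → ℂ) = rho G g (v : G → ℂ) :=
      fun g v => rfl
    haveI : Nontrivial V := by
      refine ⟨⟨⟨SvN18.f0 M χ', SvN18.f0_mem χ'⟩, 0, ?_⟩⟩
      intro hcon
      have h1 : SvN18.f0 M χ' 1 = 0 := congrFun (congrArg Subtype.val hcon) 1
      rw [SvN18.f0_one χ'] at h1
      exact one_ne_zero h1
    have hVirr : ∀ U : Submodule ℂ V, (∀ g : G, ∀ v ∈ U, π g v ∈ U) → U = ⊥ ∨ U = ⊤ := by
      intro U hUinv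
      set U' : Submodule ℂ (G → ℂ) := U.map (indSpace M χ').subtype with hU'
      have hle : U' ≤ indSpace M χ' := Submodule.map_subtype_le _ _
      have hinv : ∀ g : G, ∀ f ∈ U', rho G g f ∈ U' := by
        rintro g f ⟨v, hv, rfl⟩
        exact ⟨π g v, hUinv g v hv, (hπapp g v).symm⟩
      rcases SvN18.irred A hAcent hcommA ε hε hZfin M hMcomm hMmax hZM hAM χ' hgen
          U' hle hinv with hb | ht
      · left
        rw [eq_bot_iff]
        intro v hv
        have h1 : ((v : G → ℂ)) ∈ U' := ⟨v, hv, rfl⟩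
        rw [hb] at h1
        have h3 : v = 0 := Subtype.ext ((Submodule.mem_bot ℂ).mp h1)
        rw [h3]; exact Submodule.zero_mem ⊥
      · right
        rw [eq_top_iff]
        intro v _
        have h1 : ((v : G → ℂ)) ∈ U' := by rw [ht]; exact v.2
        obtain ⟨w, hw, hweq⟩ := h1
        have h2 : w = v := Subtype.ext hweq
        rwa [← h2]
    have hVcent : ∀ (z : G) (hz : z ∈ Subgroup.center G),
        π z = ((χ₂ ⟨z, hZM₂ hz⟩ : ℂˣ) : ℂ) • (1 : V →ₗ[ℂ] V) := by
      intro z hz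
      apply LinearMap.ext; intro v; apply Subtype.ext
      show rho G z (v : G → ℂ) = ((((χ₂ ⟨z, hZM₂ hz⟩ : ℂˣ) : ℂ) • (1 : V →ₗ[ℂ] V)) v : G → ℂ)
      rw [SvN18.rho_central χ' hZM z hz v.2, ← hagree z hz]
      rfl
    obtain ⟨S, hSinj, hSrange, hSint⟩ :=
      SvN18.univ A hAcent hcommA ε hε hZfin M₂ hM₂comm hM₂max hZM₂ hAM₂ χ₂ hgen₂
        V inferInstance inferInstance π inferInstance hVirr hVcent
    obtain ⟨W, hW⟩ := Submodule.exists_isCompl (indSpace M χ')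
    set pr : (G → ℂ) →ₗ[ℂ] V := Submodule.linearProjOfIsCompl _ W hW with hpr
    refine ⟨S ∘ₗ pr, ?_, ?_, ?_⟩
    · apply le_antisymm
      · rintro f ⟨g0, hg0, rfl⟩
        show S (pr g0) ∈ indSpace M₂ χ₂
        rw [show pr g0 = ⟨g0, hg0⟩ from Submodule.linearProjOfIsCompl_apply_left hW ⟨g0, hg0⟩]
        rw [← hSrange]
        exact LinearMap.mem_range_self S _
      · intro f hf
        rw [← hSrange] at hf
        obtain ⟨v, rfl⟩ := hf
        refine ⟨(v : G → ℂ), v.2, ?_⟩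
        show S (pr ((v : G → ℂ))) = S v
        rw [show pr ((v : G → ℂ)) = v from Submodule.linearProjOfIsCompl_apply_left hW v]
    · intro f hf g0 hg0 heq
      have h1 : S (pr f) = S (pr g0) := heq
      have h2 : pr f = pr g0 := hSinj h1
      have h3 : pr f = ⟨f, hf⟩ := Submodule.linearProjOfIsCompl_apply_left hW ⟨f, hf⟩
      have h4 : pr g0 = ⟨g0, hg0⟩ := Submodule.linearProjOfIsCompl_apply_left hW ⟨g0, hg0⟩
      rw [h3, h4] at h2
      exact congrArg Subtype.val h2
    · intro g f hf
      show S (pr (rho G g f)) = rho G g (S (pr f))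
      have h3 : pr f = ⟨f, hf⟩ := Submodule.linearProjOfIsCompl_apply_left hW ⟨f, hf⟩
      have h5 : pr (rho G g f) = ⟨rho G g f, SvN18.rho_stab χ' g hf⟩ :=
        Submodule.linearProjOfIsCompl_apply_left hW ⟨rho G g f, SvN18.rho_stab χ' g hf⟩
      rw [h3, h5]
      have h6 : (⟨rho G g f, SvN18.rho_stab χ' g hf⟩ : V) = π g ⟨f, hf⟩ := Subtype.ext rfl
      rw [h6, hSint g ⟨f, hf⟩]
  · exact SvN18.univ A hAcent hcommA ε hε hZfin M hMcomm hMmax hZM hAM χ' hgen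
end
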